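/- Let α ∈ ℕ, α ≥ 1, and define the polynomials p_n^{(α)}(x) = Σ_{k=0}^n (-1)^{kn - binom(k,2)} · binom(n,k)_F · binom(α+n+k-1, n)_F · x^k, where binom(·,·)_F are Fibonomial coefficients. Then for all m, n ≥ 0: (1-q^α) Σ_{j=0}^∞ q^{αj} p_n^{(α)}(q^j/φ) p_m^{(α)}(q^j/φ) = δ_{n,m} · (-1)^{αn} · F_α/F_{α+2n}, where φ = (1+√5)/2 and q = (1-√5)/(1+√5). -/

import Mathlib

open Finset goldenRatio

noncomputable def goldenPhi : ℝ := (1 + Real.sqrt 5) / 2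

noncomputable def fibQ : ℝ := (1 - Real.sqrt 5) / (1 + Real.sqrt 5)

/-- The Fibonomial coefficient `∏_{i=1}^k F_{m-i+1}/F_i`, as a real number. -/
noncomputable def fibinom (m k : ℕ) : ℝ :=
  ∏ j ∈ Finset.range k, (Nat.fib (m - j) : ℝ) / (Nat.fib (j + 1) : ℝ)

/-- The polynomial `p_n^{(α)}(x)`. -/
noncomputable def fibPoly (α n : ℕ) (x : ℝ) : ℝ :=
  ∑ k ∈ Finset.range (n + 1),
    (-1 : ℝ) ^ (k * n - Nat.choose k 2) * fibinom n k * fibinom (α + n + k - 1) n * x ^ k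

namespace FibOrth

local notation "Q" => fibQ
local notation "Φ" => goldenPhi

lemma sqrt5_pos : (0:ℝ) < Real.sqrt 5 := Real.sqrt_pos.mpr (by norm_num)

lemma sqrt5_lt : Real.sqrt 5 < 3 := by
  nlinarith [Real.sq_sqrt (show (0:ℝ) ≤ 5 by norm_num), sqrt5_pos]

lemma sqrt5_gt : 2 < Real.sqrt 5 := by
  nlinarith [Real.sq_sqrt (show (0:ℝ) ≤ 5 by norm_num), sqrt5_pos]

lemma phi_eq : Φ = Real.goldenRatio := rfl

lemma phi_pos : 0 < Φ := by rw [phi_eq]; exact Real.goldenRatio_pos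

lemma phi_ne : Φ ≠ 0 := ne_of_gt phi_pos

lemma one_add_sqrt5_ne : (1 + Real.sqrt 5) ≠ 0 := by positivity

lemma q_eq : Q = Real.goldenConj / Real.goldenRatio := by
  unfold fibQ Real.goldenConj Real.goldenRatio
  rw [div_div_div_eq]
  field_simp

lemma q_neg : Q < 0 := by
  rw [q_eq]
  exact div_neg_of_neg_of_pos Real.goldenConj_neg Real.goldenRatio_pos

lemma q_ne : Q ≠ 0 := ne_of_lt q_neg

lemma q_gt : -1 < Q := by
  unfold fibQ
  rw [lt_div_iff₀ (by positivity : (0:ℝ) < 1 + Real.sqrt 5)]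
  linarith [sqrt5_pos]

lemma abs_q_lt : |Q| < 1 := abs_lt.mpr ⟨q_gt, lt_trans q_neg one_pos⟩

lemma phi_sq_q : Φ ^ 2 * Q = -1 := by
  have h5 : Real.sqrt 5 ^ 2 = 5 := Real.sq_sqrt (by norm_num)
  have h1 : (1:ℝ) + Real.sqrt 5 ≠ 0 := by positivity
  unfold goldenPhi fibQ
  field_simp
  nlinarith [h5]

lemma psi_eq : Real.goldenConj = Φ * Q := by
  rw [q_eq, phi_eq, mul_div_cancel₀ _ Real.goldenRatio_ne_zero]

lemma fib_eq (j : ℕ) : (Nat.fib j : ℝ) = Φ ^ j * (1 - Q ^ j) / Real.sqrt 5 := by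
  rw [Real.coe_fib_eq, psi_eq, mul_pow, phi_eq]
  ring

lemma abs_q_pow_lt {j : ℕ} (hj : 1 ≤ j) : |Q ^ j| < 1 := by
  rw [abs_pow]
  calc |Q| ^ j ≤ |Q| ^ 1 := pow_le_pow_of_le_one (abs_nonneg _) (le_of_lt abs_q_lt) hj
  _ < 1 := by simpa using abs_q_lt

lemma one_sub_q_pow_pos {j : ℕ} (hj : 1 ≤ j) : 0 < 1 - Q ^ j := by
  have := abs_q_pow_lt hj
  rw [abs_lt] at this
  linarith [this.2]

lemma one_sub_q_pow_ne {j : ℕ} (hj : 1 ≤ j) : 1 - Q ^ j ≠ 0 :=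
  ne_of_gt (one_sub_q_pow_pos hj)

lemma q_pow_lt_one {j : ℕ} (hj : 1 ≤ j) : Q ^ j < 1 := by
  have := abs_q_pow_lt hj; rw [abs_lt] at this; exact this.2



noncomputable def Ap (a k : ℕ) : ℝ := ∏ i ∈ range k, (1 - Q ^ (a + i))

noncomputable def Pp (k : ℕ) : ℝ := ∏ i ∈ range k, (1 - Q ^ (i + 1))

noncomputable def qb (m k : ℕ) : ℝ := ∏ j ∈ range k, (1 - Q ^ (m - j)) / (1 - Q ^ (j + 1))

lemma Pp_ne (k : ℕ) : Pp k ≠ 0 :=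
  Finset.prod_ne_zero_iff.mpr fun i _ => one_sub_q_pow_ne (by omega)

lemma Ap_ne {a : ℕ} (ha : 1 ≤ a) (k : ℕ) : Ap a k ≠ 0 :=
  Finset.prod_ne_zero_iff.mpr fun i _ => one_sub_q_pow_ne (by omega)

lemma Pp_succ (k : ℕ) : Pp (k + 1) = Pp k * (1 - Q ^ (k + 1)) := Finset.prod_range_succ _ _

lemma qb_zero (m : ℕ) : qb m 0 = 1 := Finset.prod_range_zero _

lemma qb_self (n : ℕ) : qb n n = 1 := by
  unfold qb
  rw [Finset.prod_div_distrib]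
  rw [div_eq_one_iff_eq (Finset.prod_ne_zero_iff.mpr fun i _ => one_sub_q_pow_ne (by omega))]
  rw [← Finset.prod_range_reflect]
  apply Finset.prod_congr rfl
  intro j hj
  simp only [Finset.mem_range] at hj
  congr 2
  omega

lemma qb_overflow (n : ℕ) : qb n (n + 1) = 0 := by
  unfold qb
  apply Finset.prod_eq_zero (Finset.self_mem_range_succ n)
  simp

/-- Pascal-type recurrence for the q-binomial. -/
lemma qb_pascal {n k : ℕ} (hk : k ≤ n) :
    qb (n + 1) (k + 1) = Q ^ (k + 1) * qb n (k + 1) + qb n k := by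
  have hW : ∀ m : ℕ, qb m (k+1) = (∏ j ∈ range (k+1), (1 - Q ^ (m - j))) / Pp (k+1) := by
    intro m; unfold qb Pp; rw [Finset.prod_div_distrib]
  have h1 : ∏ j ∈ range (k+1), (1 - Q ^ (n + 1 - j))
      = (1 - Q ^ (n+1)) * ∏ j ∈ range k, (1 - Q ^ (n - j)) := by
    rw [Finset.prod_range_succ']
    rw [mul_comm]
    congr 1
    apply Finset.prod_congr rfl
    intro j hj; simp only [Finset.mem_range] at hj
    congr 2; omega
  have h2 : ∏ j ∈ range (k+1), (1 - Q ^ (n - j))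
      = (∏ j ∈ range k, (1 - Q ^ (n - j))) * (1 - Q ^ (n - k)) := Finset.prod_range_succ _ _
  have h3 : qb n k = (∏ j ∈ range k, (1 - Q ^ (n - j))) / Pp k := by
    unfold qb Pp; rw [Finset.prod_div_distrib]
  have hp : Pp k ≠ 0 := Pp_ne k
  have hk1 : (1 - Q ^ (k+1)) ≠ 0 := one_sub_q_pow_ne (by omega)
  have hqq : Q ^ (k+1) * Q ^ (n-k) = Q ^ (n+1) := by
    rw [← pow_add]; congr 1; omega
  rw [hW, hW, h1, h2, h3, Pp_succ]
  rw [show (∏ j ∈ range k, (1 - Q ^ (n - j))) / Pp k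
      = (∏ j ∈ range k, (1 - Q ^ (n - j))) * (1 - Q ^ (k+1)) / (Pp k * (1 - Q ^ (k+1))) from by
      field_simp]
  rw [mul_div_assoc', ← add_div]
  congr 1
  linear_combination (∏ j ∈ range k, (1 - Q ^ (n - j))) * hqq



lemma choose_two_succ (k : ℕ) : (k+1).choose 2 = k.choose 2 + k := by
  rw [Nat.choose_succ_succ]
  simp [Nat.choose_one_right]; omega

/-- Finite q-binomial theorem. -/
theorem qbt (n : ℕ) : ∀ t : ℝ,
    ∑ k ∈ range (n+1), (-1:ℝ)^k * Q^(k.choose 2) * qb n k * t^k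
      = ∏ i ∈ range n, (1 - t * Q^i) := by
  induction n with
  | zero => intro t; simp [qb_zero]
  | succ n ih =>
    intro t
    rw [Finset.sum_range_succ']
    have hsplit : ∀ k ∈ range (n+1),
        (-1:ℝ)^(k+1) * Q^((k+1).choose 2) * qb (n+1) (k+1) * t^(k+1)
        = ((-1:ℝ)^(k+1) * Q^((k+1).choose 2) * qb n (k+1) * (Q^(k+1) * t^(k+1)))
          + ((-1:ℝ)^(k+1) * Q^((k+1).choose 2) * qb n k * t^(k+1)) := by
      intro k hk
      rw [qb_pascal (Finset.mem_range_succ_iff.mp hk)]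
      ring
    rw [Finset.sum_congr rfl hsplit, Finset.sum_add_distrib]
    have claim1 : (∑ k ∈ range (n+2), (-1:ℝ)^k * Q^(k.choose 2) * qb n k * (Q*t)^k)
        = (∑ k ∈ range (n+1),
        (-1:ℝ)^(k+1) * Q^((k+1).choose 2) * qb n (k+1) * (Q^(k+1) * t^(k+1)))
        + (-1:ℝ)^0 * Q^((0:ℕ).choose 2) * qb (n+1) 0 * t^0 := by
      rw [Finset.sum_range_succ']
      congr 1
      · apply Finset.sum_congr rfl
        intro k _
        rw [mul_pow]
      all_goals simp [qb_zero]
    have claim2 : (∑ k ∈ range (n+1),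
        (-1:ℝ)^(k+1) * Q^((k+1).choose 2) * qb n k * t^(k+1))
        = -t * ∑ k ∈ range (n+1), (-1:ℝ)^k * Q^(k.choose 2) * qb n k * (Q*t)^k := by
      rw [Finset.mul_sum]
      apply Finset.sum_congr rfl
      intro k _
      rw [choose_two_succ, pow_add, mul_pow, pow_succ, pow_succ]
      ring
    have claim3 : ∑ k ∈ range (n+2), (-1:ℝ)^k * Q^(k.choose 2) * qb n k * (Q*t)^k
        = ∏ i ∈ range n, (1 - (Q*t) * Q^i) := by
      rw [Finset.sum_range_succ, qb_overflow]
      rw [ih (Q*t)]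
      simp
    rw [add_right_comm, ← claim1, claim2, claim3, ih (Q*t)]
    rw [Finset.prod_range_succ']
    have : ∀ i ∈ range n, (1 - (Q*t) * Q^i) = (1 - t * Q^(i+1)) := by
      intro i _; rw [pow_succ]; ring
    rw [Finset.prod_congr rfl this]
    simp
    ring



/-- The key rational-function identity (norm computation). -/
theorem Hid (n : ℕ) : ∀ x : ℝ, (∀ s, s ≤ n → 1 - x * Q^s ≠ 0) →
    ∑ k ∈ range (n+1), (-1:ℝ)^k * Q^(k.choose 2) * Q^k * qb n k / (Q^(k*n) * (1 - x * Q^k))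
      = x^n * Pp n / ∏ i ∈ range (n+1), (1 - x * Q^i) := by
  induction n with
  | zero =>
    intro x _
    simp [qb_zero, Pp]
  | succ n ih =>
    intro x hx
    have hQ : (Q:ℝ) ≠ 0 := q_ne
    rw [Finset.sum_range_succ']
    have hsplit : ∀ k ∈ range (n+1),
        (-1:ℝ)^(k+1) * Q^((k+1).choose 2) * Q^(k+1) * qb (n+1) (k+1)
           / (Q^((k+1)*(n+1)) * (1 - x * Q^(k+1)))
        = ((-1:ℝ)^(k+1) * Q^((k+1).choose 2) * Q^(k+1) * qb n (k+1)
            / (Q^((k+1)*n) * (1 - x * Q^(k+1))))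
          + (-(((-1:ℝ)^k * Q^(k.choose 2) * Q^k * qb n k
            / (Q^(k*n) * (1 - (Q*x) * Q^k))) / Q^n)) := by
      intro k hk
      have hkn : k ≤ n := Finset.mem_range_succ_iff.mp hk
      rw [qb_pascal hkn, choose_two_succ]
      have hne : 1 - x * Q^(k+1) ≠ 0 := hx (k+1) (by omega)
      have hne2 : 1 - (Q*x) * Q^k ≠ 0 := by
        have : (Q*x) * Q^k = x * Q^(k+1) := by ring
        rw [this]; exact hne
      field_simp
      ring
    rw [Finset.sum_congr rfl hsplit, Finset.sum_add_distrib]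
    have claim1 : (∑ k ∈ range (n+2),
          (-1:ℝ)^k * Q^(k.choose 2) * Q^k * qb n k / (Q^(k*n) * (1 - x * Q^k)))
        = (∑ k ∈ range (n+1),
          (-1:ℝ)^(k+1) * Q^((k+1).choose 2) * Q^(k+1) * qb n (k+1)
            / (Q^((k+1)*n) * (1 - x * Q^(k+1))))
        + (-1:ℝ)^0 * Q^((0:ℕ).choose 2) * Q^0 * qb (n+1) 0
            / (Q^(0*(n+1)) * (1 - x * Q^0)) := by
      rw [Finset.sum_range_succ']
      norm_num [qb_zero]
    rw [add_right_comm, ← claim1, Finset.sum_range_succ _ (n+1), qb_overflow]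
    rw [show ((-1:ℝ)^(n+1) * Q^((n+1).choose 2) * Q^(n+1) * 0
        / (Q^((n+1)*n) * (1 - x * Q^(n+1)))) = 0 from by simp]
    rw [add_zero, ih x (fun s hs => hx s (by omega))]
    have claim2 : (∑ k ∈ range (n+1),
        -(((-1:ℝ)^k * Q^(k.choose 2) * Q^k * qb n k
            / (Q^(k*n) * (1 - (Q*x) * Q^k))) / Q^n))
        = -(((Q*x)^n * Pp n / ∏ i ∈ range (n+1), (1 - (Q*x) * Q^i)) / Q^n) := by
      have hterm : ∀ k ∈ range (n+1),
          -((-1:ℝ)^k * Q^(k.choose 2) * Q^k * qb n k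
              / (Q^(k*n) * (1 - (Q*x) * Q^k)) / Q^n)
          = -((-1:ℝ)^k * Q^(k.choose 2) * Q^k * qb n k
              / (Q^(k*n) * (1 - (Q*x) * Q^k))) / Q^n := by
        intro k _; ring
      rw [Finset.sum_congr rfl hterm, ← Finset.sum_div, Finset.sum_neg_distrib, neg_div]
      rw [ih (Q*x) (fun s hs => by
        have h' : 1 - (Q*x) * Q^s = 1 - x * Q^(s+1) := by ring
        rw [h']; exact hx (s+1) (by omega))]
    rw [claim2]
    -- now pure algebra
    have hM : ∀ i ∈ range (n+1), (1 - (Q*x) * Q^i) = (1 - x * Q^(i+1)) := by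
      intro i _; ring
    rw [Finset.prod_congr rfl hM]
    have hD2 : ∏ i ∈ range (n+1), (1 - x * Q^(i+1))
        = (∏ i ∈ range n, (1 - x * Q^(i+1))) * (1 - x * Q^(n+1)) := Finset.prod_range_succ _ _
    have hD1 : ∏ i ∈ range (n+1), (1 - x * Q^i)
        = (∏ i ∈ range n, (1 - x * Q^(i+1))) * (1 - x) := by
      rw [Finset.prod_range_succ']
      simp
    have hD : ∏ i ∈ range (n+2), (1 - x * Q^i)
        = (∏ i ∈ range (n+1), (1 - x * Q^(i+1))) * (1 - x) := by
      rw [Finset.prod_range_succ']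
      simp
    rw [hD2] at *
    rw [hD1, hD, Pp_succ]
    have hMne : (∏ i ∈ range n, (1 - x * Q^(i+1))) ≠ 0 :=
      Finset.prod_ne_zero_iff.mpr fun i hi => hx (i+1) (by simp at hi; omega)
    have h0 : (1 - x) ≠ 0 := by
      have := hx 0 (by omega); simpa using this
    have hn1 : (1 - x * Q^(n+1)) ≠ 0 := hx (n+1) (le_refl _)
    have hq1 : (1 - Q^(n+1)) ≠ 0 := one_sub_q_pow_ne (by omega)
    field_simp
    ring



/-- Vanishing lemma: the q-binomial sum annihilates low-degree polynomials. -/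
lemma Zlem (n : ℕ) (b : ℕ → ℝ) :
    ∑ k ∈ range (n+1), (-1:ℝ)^k * Q^(k.choose 2) * qb n k
      * (∑ s ∈ range n, b s * Q^(k*(s+1))) / Q^(k*n) = 0 := by
  have hQ : (Q:ℝ) ≠ 0 := q_ne
  have hterm : ∀ k ∈ range (n+1), (-1:ℝ)^k * Q^(k.choose 2) * qb n k
      * (∑ s ∈ range n, b s * Q^(k*(s+1))) / Q^(k*n)
      = ∑ s ∈ range n, b s * ((-1:ℝ)^k * Q^(k.choose 2) * qb n k * (Q^(s+1)/Q^n)^k) := by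
    intro k _
    rw [Finset.mul_sum, Finset.sum_div]
    apply Finset.sum_congr rfl
    intro s _
    rw [div_pow, ← pow_mul, ← pow_mul]
    field_simp
    ring
  rw [Finset.sum_congr rfl hterm, Finset.sum_comm]
  apply Finset.sum_eq_zero
  intro s hs
  rw [← Finset.mul_sum, qbt n (Q^(s+1)/Q^n)]
  have hmem : n - 1 - s ∈ range n := by
    simp only [Finset.mem_range] at hs ⊢
    omega
  have hzero : (1 - Q^(s+1)/Q^n * Q^(n-1-s)) = 0 := by
    rw [div_mul_eq_mul_div, ← pow_add]
    rw [show s+1+(n-1-s) = n from by simp only [Finset.mem_range] at hs; omega]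
    rw [div_self (pow_ne_zero _ hQ)]
    ring
  rw [Finset.prod_eq_zero hmem hzero, mul_zero]

lemma exists_coeffs (t : Finset ℕ) (a : ℕ → ℝ) :
    ∃ b : ℕ → ℝ, ∀ z : ℝ, ∏ i ∈ t, (1 - a i * z) = ∑ s ∈ range (t.card + 1), b s * z^s := by
  induction t using Finset.cons_induction with
  | empty => exact ⟨fun _ => 1, fun z => by simp⟩
  | cons i t hi ih =>
    obtain ⟨b, hb⟩ := ih
    refine ⟨fun s => (if s ≤ t.card then b s else 0)
      - a i * (if s = 0 then 0 else b (s-1)), fun z => ?_⟩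
    rw [Finset.prod_cons, hb, Finset.card_cons]
    have e1 : ∑ s ∈ range (t.card+2), ((if s ≤ t.card then b s else 0)
          - a i * (if s = 0 then 0 else b (s-1))) * z^s
        = (∑ s ∈ range (t.card+2), (if s ≤ t.card then b s else 0) * z^s)
          - a i * ∑ s ∈ range (t.card+2), (if s = 0 then 0 else b (s-1)) * z^s := by
      rw [Finset.mul_sum, ← Finset.sum_sub_distrib]
      apply Finset.sum_congr rfl; intro s _; ring
    rw [e1]
    have e2 : ∑ s ∈ range (t.card+2), (if s ≤ t.card then b s else 0) * z^s
        = ∑ s ∈ range (t.card+1), b s * z^s := by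
      rw [Finset.sum_range_succ, if_neg (by omega), zero_mul, add_zero]
      apply Finset.sum_congr rfl
      intro s hs
      rw [if_pos (by simp only [Finset.mem_range] at hs; omega)]
    have e3 : ∑ s ∈ range (t.card+2), (if s = 0 then 0 else b (s-1)) * z^s
        = ∑ s ∈ range (t.card+1), b s * z^(s+1) := by
      rw [Finset.sum_range_succ']
      simp
    rw [e2, e3, sub_mul, one_mul]
    congr 1
    rw [Finset.mul_sum, Finset.mul_sum]
    exact Finset.sum_congr rfl fun s _ => by ring

lemma exists_coeffs_lt (t : Finset ℕ) (a : ℕ → ℝ) (n : ℕ) (h : t.card < n) :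
    ∃ b : ℕ → ℝ, ∀ z : ℝ, ∏ i ∈ t, (1 - a i * z) = ∑ s ∈ range n, b s * z^s := by
  obtain ⟨b, hb⟩ := exists_coeffs t a
  refine ⟨fun s => if s ≤ t.card then b s else 0, fun z => ?_⟩
  rw [hb z]
  calc ∑ s ∈ range (t.card+1), b s * z^s
      = ∑ s ∈ range (t.card+1), (if s ≤ t.card then b s else 0) * z^s := by
        apply Finset.sum_congr rfl
        intro s hs
        rw [if_pos (by simp only [Finset.mem_range] at hs; omega)]
    _ = ∑ s ∈ range n, (if s ≤ t.card then b s else 0) * z^s := by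
        apply Finset.sum_subset (Finset.range_subset_range.mpr (by omega))
        intro s _ hs
        rw [if_neg (by simp only [Finset.mem_range] at hs; omega), zero_mul]

lemma exists_pf (n : ℕ) (a : ℕ → ℝ) (B : ℝ) (hB : B ≠ 0) :
    ∃ c : ℕ → ℝ, ∀ z : ℝ, ∏ i ∈ range n, (1 - a i * z)
      = (∏ i ∈ range n, (1 - a i * B⁻¹)) + (1 - B * z) * ∑ s ∈ range n, c s * z^s := by
  obtain ⟨b, hb⟩ := exists_coeffs (range n) a
  rw [Finset.card_range] at hb
  refine ⟨fun i => -B⁻¹ * ∑ s ∈ range (n+1), (if i < s then b s * (B⁻¹)^(s-1-i) else 0),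
    fun z => ?_⟩
  rw [hb z, hb B⁻¹]
  have swap : ∑ i ∈ range n, (-B⁻¹ * ∑ s ∈ range (n+1),
        (if i < s then b s * (B⁻¹)^(s-1-i) else 0)) * z^i
      = -B⁻¹ * ∑ s ∈ range (n+1), b s * ∑ i ∈ range s, z^i * (B⁻¹)^(s-1-i) := by
    have e : ∀ i ∈ range n, (-B⁻¹ * ∑ s ∈ range (n+1),
          (if i < s then b s * (B⁻¹)^(s-1-i) else 0)) * z^i
        = -B⁻¹ * ∑ s ∈ range (n+1),
            (if i < s then b s * (B⁻¹)^(s-1-i) * z^i else 0) := by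
      intro i _
      rw [Finset.mul_sum, Finset.sum_mul, Finset.mul_sum]
      apply Finset.sum_congr rfl
      intro s _
      split
      · ring
      · ring
    rw [Finset.sum_congr rfl e, ← Finset.mul_sum, Finset.sum_comm]
    congr 1
    apply Finset.sum_congr rfl
    intro s hs
    have hs' : s ≤ n := Finset.mem_range_succ_iff.mp hs
    rw [← Finset.sum_filter]
    rw [show (range n).filter (fun i => i < s) = range s from by
      ext x
      simp only [Finset.mem_filter, Finset.mem_range]
      omega]
    rw [Finset.mul_sum]
    exact Finset.sum_congr rfl fun i _ => by ring
  rw [swap]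
  have hfac : (1 - B*z) * (-B⁻¹ * ∑ s ∈ range (n+1), b s * ∑ i ∈ range s, z^i*(B⁻¹)^(s-1-i))
      = (z - B⁻¹) * ∑ s ∈ range (n+1), b s * ∑ i ∈ range s, z^i*(B⁻¹)^(s-1-i) := by
    have h1 : (1-B*z) * -B⁻¹ = z - B⁻¹ := by field_simp; ring
    calc (1-B*z) * (-B⁻¹ * ∑ s ∈ range (n+1), b s * ∑ i ∈ range s, z^i*(B⁻¹)^(s-1-i))
        = ((1-B*z) * -B⁻¹) * ∑ s ∈ range (n+1), b s * ∑ i ∈ range s, z^i*(B⁻¹)^(s-1-i) := by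
          ring
      _ = _ := by rw [h1]
  rw [hfac, Finset.mul_sum]
  have final : ∀ s ∈ range (n+1),
      (z-B⁻¹)*(b s * ∑ i ∈ range s, z^i*(B⁻¹)^(s-1-i)) = b s * z^s - b s * (B⁻¹)^s := by
    intro s _
    have hg := geom_sum₂_mul z B⁻¹ s
    linear_combination b s * hg
  rw [Finset.sum_congr rfl final, Finset.sum_sub_distrib]
  ring



lemma q_pow (j : ℕ) : Q^j = (-1:ℝ)^j / Φ^(2*j) := by
  have h : (Φ^2 * Q)^j = ((-1:ℝ))^j := by rw [phi_sq_q]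
  rw [mul_pow, ← pow_mul] at h
  rw [eq_div_iff (pow_ne_zero _ phi_ne)]
  linear_combination h

lemma neg_one_pow_sub {a b : ℕ} (h : b ≤ a) : (-1:ℝ)^(a-b) = (-1)^a * (-1)^b := by
  conv_rhs => rw [show a = (a - b) + b from by omega]
  rw [pow_add, mul_assoc]
  have hb : (-1:ℝ)^b * (-1)^b = 1 := by
    rw [← pow_add]
    exact Even.neg_one_pow ⟨b, rfl⟩
  rw [hb, mul_one]

lemma choose_two_le {k n : ℕ} (hk : k ≤ n) : k.choose 2 ≤ k * n := by
  rw [Nat.choose_two_right]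
  calc k * (k-1) / 2 ≤ k * (k-1) := Nat.div_le_self _ _
  _ ≤ k * n := Nat.mul_le_mul_left _ (by omega)

lemma fibinom_eq {m k : ℕ} (hk : k ≤ m) :
    fibinom m k = (∏ j ∈ range k, Φ^(m-j)/Φ^(j+1)) * qb m k := by
  unfold fibinom qb
  rw [← Finset.prod_mul_distrib]
  apply Finset.prod_congr rfl
  intro j hj
  have hj' : j < k := Finset.mem_range.mp hj
  rw [fib_eq (m-j), fib_eq (j+1)]
  have h1 : (1 - Q^(j+1)) ≠ 0 := one_sub_q_pow_ne (by omega)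
  have h5 : Real.sqrt 5 ≠ 0 := ne_of_gt sqrt5_pos
  have hp : Φ^(j+1) ≠ 0 := pow_ne_zero _ phi_ne
  field_simp

lemma phi_prod {m k : ℕ} (hk : k ≤ m) :
    (∏ j ∈ range k, Φ^(m-j)/Φ^(j+1)) * Φ^(k*k) = Φ^(k*m) := by
  rw [Finset.prod_div_distrib, Finset.prod_pow_eq_pow_sum, Finset.prod_pow_eq_pow_sum]
  have h1 : (∑ j ∈ range k, (m-j)) + (∑ j ∈ range k, j) = k*m := by
    rw [← Finset.sum_add_distrib]
    rw [Finset.sum_congr rfl (fun j hj => show (m - j) + j = m from by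
      have := Finset.mem_range.mp hj; omega)]
    rw [Finset.sum_const, Finset.card_range, smul_eq_mul]
  have h2 : (∑ j ∈ range k, (j+1)) = (∑ j ∈ range k, j) + k := by
    rw [Finset.sum_add_distrib, Finset.sum_const, Finset.card_range, smul_eq_mul, mul_one]
  have h3 : (∑ j ∈ range k, j) * 2 = k * (k-1) := Finset.sum_range_id_mul_two k
  have h4 : k * (k-1) + k = k * k := by cases k with
    | zero => simp
    | succ j => simp [Nat.succ_sub_one]; ring
  rw [div_mul_eq_mul_div, ← pow_add, div_eq_iff (pow_ne_zero _ phi_ne), ← pow_add]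
  congr 1
  linarith

lemma fibinom_div {m k : ℕ} (hk : k ≤ m) :
    fibinom m k = Φ^(k*m) * qb m k / Φ^(k*k) := by
  rw [fibinom_eq hk, ← phi_prod hk, eq_div_iff (pow_ne_zero _ phi_ne)]
  ring

lemma qb_Ap (c n : ℕ) : qb (c + n) n = Ap (c+1) n / Pp n := by
  unfold qb Ap Pp
  rw [Finset.prod_div_distrib]
  congr 1
  rw [← Finset.prod_range_reflect (fun i => 1 - Q^(c+1+i)) n]
  apply Finset.prod_congr rfl
  intro j hj
  have := Finset.mem_range.mp hj
  congr 2
  omega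

noncomputable def coef (α n k : ℕ) : ℝ :=
  (-1:ℝ)^(k*n - Nat.choose k 2) * fibinom n k * fibinom (α+n+k-1) n

lemma coef_norm (e n k : ℕ) (hk : k ≤ n) :
    coef (e+1) n k / Φ^k
    = Φ^(n*e) * ((-1:ℝ)^k * Q^(k.choose 2) * Q^k * (qb n k * Ap (e+1+k) n)
        / (Pp n * Q^(k*n))) := by
  unfold coef
  rw [show (e+1)+n+k-1 = (e+k)+n from by omega]
  rw [fibinom_div hk, fibinom_div (show n ≤ (e+k)+n by omega), qb_Ap]
  rw [neg_one_pow_sub (choose_two_le hk)]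
  rw [q_pow (k.choose 2), q_pow k, q_pow (k*n)]
  rw [show e+k+1 = e+1+k from by omega]
  have hP : Pp n ≠ 0 := Pp_ne n
  have hphi : Φ ≠ 0 := phi_ne
  set G := qb n k with hG
  set Y := Ap (e+1+k) n with hY
  set W := Pp n with hW
  have h2C : k.choose 2 * 2 + k = k * k := by
    rcases k with _ | j
    · simp
    · have hev : 2 ∣ (j+1) * j := by
        rw [mul_comm]
        exact (Nat.even_mul_succ_self j).two_dvd
      rw [Nat.choose_two_right]
      simp only [Nat.add_sub_cancel]
      rw [Nat.div_mul_cancel hev]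
      ring
  have e1 : Φ^(k*2) * Φ^(k.choose 2 * 2) = Φ^k * Φ^(k^2) := by
    rw [← pow_add, ← pow_add]
    congr 1
    have hsq : k^2 = k*k := sq k
    linarith
  have e2 : Φ^(2*k.choose 2) * Φ^(2*k) = Φ^(k*k) * Φ^k := by
    rw [← pow_add, ← pow_add]
    congr 1
    linarith
  have hs : (-1:ℝ)^(k*2) = (-1)^(k*n*2) := by
    rw [Even.neg_one_pow ⟨k, by ring⟩, Even.neg_one_pow ⟨k*n, by ring⟩]
  field_simp
  rw [show ((-1:ℝ)^(k*n))^2 = 1 by rw [← pow_mul]; exact Even.neg_one_pow ⟨k*n, by ring⟩,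
    show ((-1:ℝ)^k)^2 = 1 by rw [← pow_mul]; exact Even.neg_one_pow ⟨k, by ring⟩]
  linear_combination (Φ^(k*n) * G * Φ^(n*(e+k+n)) * Y) * e2



lemma M_vanish (e n l : ℕ) (hl : l < n) :
    ∑ k ∈ range (n+1), coef (e+1) n k / Φ^k / (1 - Q^((e+1)+k+l)) = 0 := by
  have hcard : ((range n).erase l).card < n := by
    have h1 : ((range n).erase l).card = n - 1 := by
      rw [Finset.card_erase_of_mem (Finset.mem_range.mpr hl), Finset.card_range]
    omega
  obtain ⟨b, hb⟩ := exists_coeffs_lt ((range n).erase l) (fun i => Q^((e+1)+i)) n hcard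
  have claim : ∀ k ∈ range (n+1), coef (e+1) n k / Φ^k / (1 - Q^((e+1)+k+l))
      = (Φ^(n*e)/Pp n) * ((-1:ℝ)^k * Q^(k.choose 2) * qb n k
          * (∑ s ∈ range n, b s * Q^(k*(s+1))) / Q^(k*n)) := by
    intro k hk
    have hk' : k ≤ n := Finset.mem_range_succ_iff.mp hk
    rw [coef_norm e n k hk']
    have hAp : Ap (e+1+k) n = (1 - Q^((e+1)+k+l)) * ∑ s ∈ range n, b s * (Q^k)^s := by
      unfold Ap
      rw [Finset.prod_congr rfl (fun i (_ : i ∈ range n) =>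
        show (1 - Q^((e+1+k)+i)) = 1 - Q^((e+1)+i) * Q^k from by
          rw [← pow_add]
          congr 2
          omega)]
      rw [← Finset.mul_prod_erase (range n) (fun i => 1 - Q^((e+1)+i) * Q^k)
        (Finset.mem_range.mpr hl)]
      rw [hb (Q^k)]
      congr 1
      rw [← pow_add]
      rw [show (e+1)+l+k = (e+1)+k+l from by omega]
    rw [hAp]
    have hden : (1 - Q^((e+1)+k+l)) ≠ 0 := one_sub_q_pow_ne (by omega)
    have hsum : Q^k * (∑ s ∈ range n, b s * (Q^k)^s) = ∑ s ∈ range n, b s * Q^(k*(s+1)) := by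
      rw [Finset.mul_sum]
      apply Finset.sum_congr rfl
      intro s _
      rw [← pow_mul]
      ring
    rw [← hsum]
    have hP : Pp n ≠ 0 := Pp_ne n
    have hq : (Q:ℝ) ≠ 0 := q_ne
    field_simp
  rw [Finset.sum_congr rfl claim, ← Finset.mul_sum, Zlem n b, mul_zero]

lemma M_norm (e n : ℕ) :
    ∑ k ∈ range (n+1), coef (e+1) n k / Φ^k / (1 - Q^((e+1)+k+n))
      = Φ^(n*e) * (∏ j ∈ range n, (1 - (Q^(j+1))⁻¹)) * Q^((e+1+n)*n)
        / ∏ i ∈ range (n+1), (1 - Q^((e+1+n)+i)) := by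
  have hq : (Q:ℝ) ≠ 0 := q_ne
  have hP : Pp n ≠ 0 := Pp_ne n
  obtain ⟨c, hc⟩ := exists_pf n (fun i => Q^((e+1)+i)) (Q^(e+1+n)) (pow_ne_zero _ hq)
  have hc0 : ∏ i ∈ range n, (1 - Q^((e+1)+i) * (Q^(e+1+n))⁻¹)
      = ∏ j ∈ range n, (1 - (Q^(j+1))⁻¹) := by
    rw [Finset.prod_congr rfl (fun i (hi : i ∈ range n) =>
      show (1 - Q^((e+1)+i) * (Q^(e+1+n))⁻¹) = 1 - (Q^(n-i))⁻¹ from by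
        have hi' := Finset.mem_range.mp hi
        congr 1
        have hrec2 : Q^i * Q^(n-i) = Q^n := by
          rw [← pow_add]
          congr 1
          omega
        field_simp
        linear_combination (Q*Q^e*(1 - Q^(n-i))) * hrec2 + (Q*Q^e*Q^(n-i)) * hrec2)]
    rw [← Finset.prod_range_reflect (fun j => 1 - (Q^(j+1))⁻¹) n]
    apply Finset.prod_congr rfl
    intro i hi
    have := Finset.mem_range.mp hi
    congr 3
    omega
  have claim : ∀ k ∈ range (n+1), coef (e+1) n k / Φ^k / (1 - Q^((e+1)+k+n))
      = (Φ^(n*e)/Pp n) * ((∏ j ∈ range n, (1 - (Q^(j+1))⁻¹))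
          * ((-1:ℝ)^k * Q^(k.choose 2) * Q^k * qb n k / (Q^(k*n) * (1 - Q^(e+1+n) * Q^k)))
        + ((-1:ℝ)^k * Q^(k.choose 2) * qb n k
          * (∑ s ∈ range n, c s * Q^(k*(s+1))) / Q^(k*n))) := by
    intro k hk
    have hk' : k ≤ n := Finset.mem_range_succ_iff.mp hk
    rw [coef_norm e n k hk']
    have hBQ : Q^(e+1+n) * Q^k = Q^((e+1)+k+n) := by
      rw [← pow_add]
      congr 1
      omega
    have hAp : Ap (e+1+k) n = (∏ j ∈ range n, (1 - (Q^(j+1))⁻¹))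
        + (1 - Q^(e+1+n) * Q^k) * ∑ s ∈ range n, c s * (Q^k)^s := by
      unfold Ap
      rw [Finset.prod_congr rfl (fun i (_ : i ∈ range n) =>
        show (1 - Q^((e+1+k)+i)) = 1 - Q^((e+1)+i) * Q^k from by
          rw [← pow_add]
          congr 2
          omega)]
      rw [hc (Q^k), hc0]
    rw [hAp]
    have hden : (1 - Q^((e+1)+k+n)) ≠ 0 := one_sub_q_pow_ne (by omega)
    have hden' : (1 - Q^(e+1+n) * Q^k) ≠ 0 := by rw [hBQ]; exact hden
    have hsum : Q^k * (∑ s ∈ range n, c s * (Q^k)^s) = ∑ s ∈ range n, c s * Q^(k*(s+1)) := by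
      rw [Finset.mul_sum]
      apply Finset.sum_congr rfl
      intro s _
      rw [← pow_mul]
      ring
    rw [← hsum, ← hBQ]
    have hden'' : (1 - Q^k * Q^(e+1+n)) ≠ 0 := by rw [mul_comm]; exact hden'
    field_simp
  rw [Finset.sum_congr rfl claim, ← Finset.mul_sum, Finset.sum_add_distrib, ← Finset.mul_sum]
  rw [Hid n (Q^(e+1+n)) (fun s hs => by
    rw [show Q^(e+1+n) * Q^s = Q^((e+1+n)+s) from by rw [← pow_add]]
    exact one_sub_q_pow_ne (by omega))]
  rw [Zlem n c, add_zero]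
  rw [Finset.prod_congr rfl (fun i (_ : i ∈ range (n+1)) =>
    show (1 - Q^(e+1+n) * Q^i) = 1 - Q^((e+1+n)+i) from by rw [← pow_add])]
  have hprodne : (∏ i ∈ range (n+1), (1 - Q^((e+1+n)+i))) ≠ 0 :=
    Finset.prod_ne_zero_iff.mpr fun i _ => one_sub_q_pow_ne (by omega)
  rw [← pow_mul]
  field_simp



lemma summable_term (α k l : ℕ) (hα : 1 ≤ α) (c : ℝ) :
    Summable (fun j : ℕ => c * (Q^(α+k+l))^j) := by
  apply Summable.mul_left
  apply summable_geometric_of_norm_lt_one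
  rw [Real.norm_eq_abs]
  exact abs_q_pow_lt (by omega)

lemma tsum_eval (α n m : ℕ) (hα : 1 ≤ α) :
    ∑' j : ℕ, Q^(α*j) * fibPoly α n (Q^j/Φ) * fibPoly α m (Q^j/Φ)
      = ∑ k ∈ range (n+1), ∑ l ∈ range (m+1),
          (coef α n k / Φ^k) * (coef α m l / Φ^l) / (1 - Q^(α+k+l)) := by
  have hj : ∀ j : ℕ, Q^(α*j) * fibPoly α n (Q^j/Φ) * fibPoly α m (Q^j/Φ)
      = ∑ k ∈ range (n+1), ∑ l ∈ range (m+1),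
          ((coef α n k / Φ^k) * (coef α m l / Φ^l)) * (Q^(α+k+l))^j := by
    intro j
    unfold fibPoly
    rw [mul_assoc, Finset.sum_mul_sum, Finset.mul_sum]
    apply Finset.sum_congr rfl
    intro k _
    rw [Finset.mul_sum]
    apply Finset.sum_congr rfl
    intro l _
    unfold coef
    have hphi : Φ ≠ 0 := phi_ne
    simp only [div_pow]
    field_simp
    ring
  rw [tsum_congr hj]
  rw [Summable.tsum_finsetSum (fun k _ => by
    apply summable_sum
    intro l _
    exact summable_term α k l hα _)]
  apply Finset.sum_congr rfl
  intro k _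
  rw [Summable.tsum_finsetSum (fun l _ => summable_term α k l hα _)]
  apply Finset.sum_congr rfl
  intro l _
  rw [tsum_mul_left, tsum_geometric_of_norm_lt_one (by
    rw [Real.norm_eq_abs]; exact abs_q_pow_lt (by omega))]
  ring



lemma main_aux (e n m : ℕ) (hmn : m ≤ n) :
    (1 - Q^(e+1)) * ∑' j : ℕ, Q^((e+1)*j) * fibPoly (e+1) n (Q^j/Φ) * fibPoly (e+1) m (Q^j/Φ)
      = if n = m then (-1:ℝ)^((e+1)*n) * ((Nat.fib (e+1) : ℝ) / (Nat.fib ((e+1) + 2*n) : ℝ))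
        else 0 := by
  rw [tsum_eval (e+1) n m (by omega)]
  have hswap : ∑ k ∈ range (n+1), ∑ l ∈ range (m+1),
      (coef (e+1) n k / Φ^k) * (coef (e+1) m l / Φ^l) / (1 - Q^((e+1)+k+l))
      = ∑ l ∈ range (m+1), (coef (e+1) m l / Φ^l)
          * ∑ k ∈ range (n+1), coef (e+1) n k / Φ^k / (1 - Q^((e+1)+k+l)) := by
    rw [Finset.sum_comm]
    apply Finset.sum_congr rfl
    intro l _
    rw [Finset.mul_sum]
    apply Finset.sum_congr rfl
    intro k _
    ring
  rw [hswap]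
  rcases Nat.lt_or_ge m n with hlt | hge
  · rw [if_neg (by omega)]
    rw [Finset.sum_eq_zero, mul_zero]
    intro l hl
    rw [M_vanish e n l (by simp only [Finset.mem_range] at hl; omega), mul_zero]
  · have hmeq : m = n := le_antisymm hmn hge
    subst hmeq
    rw [if_pos rfl]
    rw [Finset.sum_range_succ]
    rw [Finset.sum_eq_zero (fun l hl => by
      rw [M_vanish e m l (Finset.mem_range.mp hl), mul_zero]), zero_add]
    rw [M_norm e m, coef_norm e m m le_rfl, qb_self]
    have hq : (Q:ℝ) ≠ 0 := q_ne
    have hphi : Φ ≠ 0 := phi_ne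
    have hsqrt : Real.sqrt 5 ≠ 0 := ne_of_gt sqrt5_pos
    have hApne : Ap (e+1+m) m ≠ 0 := Ap_ne (by omega) m
    have hPpne : Pp m ≠ 0 := Pp_ne m
    have h2m : (1 - Q^(e+1+2*m)) ≠ 0 := one_sub_q_pow_ne (by omega)
    have hPR : ∏ i ∈ range (m+1), (1 - Q^(e+1+m+i)) = Ap (e+1+m) m * (1 - Q^(e+1+2*m)) := by
      rw [Finset.prod_range_succ]
      rw [show e+1+m+m = e+1+2*m from by omega]
      rfl
    have hprodQ : ∏ j ∈ range m, Q^(j+1) = Q^(m.choose 2) * Q^m := by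
      rw [Finset.prod_pow_eq_pow_sum, ← pow_add]
      congr 1
      have h2 : (∑ j ∈ range m, (j+1)) = (∑ j ∈ range m, j) + m := by
        rw [Finset.sum_add_distrib, Finset.sum_const, Finset.card_range, smul_eq_mul, mul_one]
      have h3 : (∑ j ∈ range m, j) * 2 = m * (m-1) := Finset.sum_range_id_mul_two m
      have h4 : m.choose 2 * 2 = m * (m-1) := by
        rcases m with _ | i
        · simp
        · have hev : 2 ∣ (i+1) * i := by
            rw [mul_comm]
            exact (Nat.even_mul_succ_self i).two_dvd
          rw [Nat.choose_two_right]
          simp only [Nat.add_sub_cancel]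
          rw [Nat.div_mul_cancel hev]
      linarith
    have hc0 : (∏ j ∈ range m, (1 - (Q^(j+1))⁻¹))
        = (-1:ℝ)^m * Pp m / (Q^(m.choose 2) * Q^m) := by
      rw [eq_div_iff (mul_ne_zero (pow_ne_zero _ hq) (pow_ne_zero _ hq))]
      rw [← hprodQ, ← Finset.prod_mul_distrib]
      rw [Finset.prod_congr rfl (fun j (_ : j ∈ range m) =>
        show (1 - (Q^(j+1))⁻¹) * Q^(j+1) = -1 * (1 - Q^(j+1)) from by
          have : Q^(j+1) ≠ 0 := pow_ne_zero _ hq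
          field_simp
          ring)]
      rw [Finset.prod_mul_distrib, Finset.prod_const, Finset.card_range]
      rfl
    have E1 : Φ^(2*((e+1)*m)) * Q^((e+1)*m) = (-1:ℝ)^((e+1)*m) := by
      calc Φ^(2*((e+1)*m)) * Q^((e+1)*m) = (Φ^2*Q)^((e+1)*m) := by
            rw [mul_pow, ← pow_mul]
        _ = (-1)^((e+1)*m) := by rw [phi_sq_q]
    rw [fib_eq (e+1), fib_eq (e+1+2*m), hPR, hc0]
    have hsq : (-1:ℝ)^m * (-1)^m = 1 := by
      rw [← pow_add]
      exact Even.neg_one_pow ⟨m, by ring⟩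
    field_simp
    linear_combination ((1 - Q^(e+1)) * (Φ^(m*e))^2 * Q^((e+1+m)*m) * Φ^(e+1+2*m)) * hsq
      + ((1 - Q^(e+1)) * Q^(m*m) * Φ^(e+1)) * E1

end FibOrth


theorem fibPoly_orthogonality (α : ℕ) (hα : 1 ≤ α) (n m : ℕ) :
    (1 - fibQ ^ α) *
        ∑' j : ℕ, fibQ ^ (α * j) * fibPoly α n (fibQ ^ j / goldenPhi) *
          fibPoly α m (fibQ ^ j / goldenPhi) =
      if n = m then (-1 : ℝ) ^ (α * n) * ((Nat.fib α : ℝ) / (Nat.fib (α + 2 * n) : ℝ))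
      else 0 := by
  obtain ⟨e, rfl⟩ : ∃ e, α = e + 1 := ⟨α - 1, by omega⟩
  rcases le_or_gt m n with hmn | hnm
  · exact FibOrth.main_aux e n m hmn
  · have h := FibOrth.main_aux e m n (le_of_lt hnm)
    rw [if_neg (by omega)] at h
    rw [if_neg (by omega)]
    have heq : (∑' j : ℕ, fibQ^((e+1)*j) * fibPoly (e+1) n (fibQ^j/goldenPhi)
          * fibPoly (e+1) m (fibQ^j/goldenPhi))
        = ∑' j : ℕ, fibQ^((e+1)*j) * fibPoly (e+1) m (fibQ^j/goldenPhi)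
          * fibPoly (e+1) n (fibQ^j/goldenPhi) :=
      tsum_congr fun j => by ring
    rw [heq, h]
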